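/- arXiv:2411.15579 — 7 statements merged into one kernel-verified Lean document; each statement's English description precedes it below -/
import Mathlib

section
/- Let p ≥ 1 be real and let G = G[V₁, V₂] be a bipartite graph with parts V₁ and V₂ where |V₂| ≥ 2. Then there exists a nonempty subset U ⊆ V₁ such that the number of edges between U and V₂ is at least (|U|^(1-1/p) / 2) · (Σ_{v∈V₁} d(v)^p / ⌈log₂ |V₂|⌉)^(1/p). -/
open Finset

/-- Dyadic pigeonhole: for a bipartite graph `G[V₁,V₂]` (given by its neighborhood
function `N : V₁ → Finset V₂`) with `|V₂| ≥ 2` and `p ≥ 1`, there is a nonempty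
`U ⊆ V₁` with
`e(U,V₂) ≥ (|U|^(1-1/p)/2) · (∑_{v∈V₁} d(v)^p / ⌈log₂ |V₂|⌉)^(1/p)`. -/
theorem stmt_8 {A B : Type*} [Fintype A] [Fintype B] [Nonempty A]
    (N : A → Finset B) (p : ℝ) (hp : 1 ≤ p) (hB : 2 ≤ Fintype.card B) :
    ∃ U : Finset A, U.Nonempty ∧
      (∑ v ∈ U, ((N v).card : ℝ)) ≥
        ((U.card : ℝ) ^ (1 - 1 / p) / 2) *
          ((∑ v, ((N v).card : ℝ) ^ p) /
            ((⌈Real.logb 2 (Fintype.card B)⌉ : ℤ) : ℝ)) ^ (1 / p) := by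
  classical
  have hp0 : (0:ℝ) < p := lt_of_lt_of_le one_pos hp
  have hpne : p ≠ 0 := ne_of_gt hp0
  set S : ℝ := ∑ v, ((N v).card : ℝ) ^ p with hSdef
  have hSnn : 0 ≤ S := Finset.sum_nonneg fun v _ => Real.rpow_nonneg (by positivity) p
  have hlogb1 : (1:ℝ) ≤ Real.logb 2 (Fintype.card B) := by
    have := Real.logb_le_logb_of_le (b := 2) (by norm_num) (x := 2) (by norm_num)
      (by exact_mod_cast hB : (2:ℝ) ≤ (Fintype.card B : ℝ))
    simpa [Real.logb_self_eq_one] using this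
  have hL1 : (1:ℤ) ≤ ⌈Real.logb 2 (Fintype.card B)⌉ := by
    exact_mod_cast Int.le_ceil_iff.mpr (by norm_num; linarith)
  set Lz : ℤ := ⌈Real.logb 2 (Fintype.card B)⌉ with hLz
  set L : ℕ := Lz.toNat with hLdef
  have hLcast : ((Lz : ℤ) : ℝ) = (L : ℝ) := by
    rw [hLdef]; exact_mod_cast (Int.toNat_of_nonneg (by linarith)).symm
  have hL1n : 1 ≤ L := by omega
  have hLpos : (0:ℝ) < (L:ℝ) := by exact_mod_cast hL1n
  -- |B| ≤ 2^L
  have hB2L : Fintype.card B ≤ 2 ^ L := by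
    have h1 : Real.logb 2 (Fintype.card B) ≤ (L : ℝ) := by
      rw [← hLcast]; exact Int.le_ceil _
    have h2 : ((Fintype.card B : ℝ)) ≤ (2:ℝ) ^ (L:ℝ) := by
      calc ((Fintype.card B : ℝ)) = (2:ℝ) ^ (Real.logb 2 (Fintype.card B)) := by
            rw [Real.rpow_logb (by norm_num) (by norm_num) (by positivity)]
          _ ≤ (2:ℝ) ^ (L:ℝ) := Real.rpow_le_rpow_of_exponent_le (by norm_num) h1
    have h3 : ((Fintype.card B : ℝ)) ≤ ((2 ^ L : ℕ) : ℝ) := by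
      push_cast
      rw [← Real.rpow_natCast 2 L]
      exact h2
    exact_mod_cast h3
  by_cases hS0 : S = 0
  · obtain ⟨a⟩ := ‹Nonempty A›
    refine ⟨{a}, Finset.singleton_nonempty a, ?_⟩
    rw [hS0, zero_div, Real.zero_rpow (by positivity), mul_zero]
    simp only [Finset.sum_singleton]
    positivity
  · have hSpos : 0 < S := lt_of_le_of_ne hSnn (Ne.symm hS0)
    -- classes
    set C : ℕ → Finset A := fun i => Finset.univ.filter
      (fun v => 2 ^ i ≤ (N v).card ∧ (N v).card ≤ 2 ^ (i+1)) with hC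
    -- coverage
    have hite : ∀ (v : A) (i : ℕ), (0:ℝ) ≤ (if v ∈ C i then ((N v).card : ℝ) ^ p else 0) := by
      intro v i
      split
      · positivity
      · exact le_rfl
    have hcov : S ≤ ∑ i ∈ Finset.range L, ∑ v ∈ C i, ((N v).card : ℝ) ^ p := by
      have hpt : ∀ v : A, ((N v).card : ℝ) ^ p ≤
          ∑ i ∈ Finset.range L, if v ∈ C i then ((N v).card : ℝ) ^ p else 0 := by
        intro v
        by_cases hd : (N v).card = 0
        · have h0 : ((N v).card : ℝ) ^ p = 0 := by
            rw [hd]; simp [Real.zero_rpow hpne]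
          rw [h0]
          exact Finset.sum_nonneg fun i _ => by split <;> exact le_rfl
        · have hd1 : 1 ≤ (N v).card := Nat.one_le_iff_ne_zero.mpr hd
          have hdB : (N v).card ≤ 2 ^ L :=
            le_trans (Finset.card_le_univ _) (by simpa using hB2L)
          set i₀ : ℕ := min (Nat.log 2 ((N v).card)) (L - 1) with hi0
          have hiL : i₀ < L := by
            have := Nat.sub_lt (by omega : 0 < L) one_pos
            omega
          have hmem : v ∈ C i₀ := by
            rw [hC]
            simp only [Finset.mem_filter, Finset.mem_univ, true_and]
            rcases le_or_gt (Nat.log 2 ((N v).card)) (L - 1) with h | h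
            · have hi : i₀ = Nat.log 2 ((N v).card) := min_eq_left h
              rw [hi]
              exact ⟨Nat.pow_log_le_self 2 hd,
                le_of_lt (Nat.lt_pow_succ_log_self (by norm_num) _)⟩
            · have hi : i₀ = L - 1 := min_eq_right (le_of_lt h)
              have hlog : Nat.log 2 ((N v).card) ≤ L := by
                have := Nat.log_mono_right (b := 2) hdB
                rwa [Nat.log_pow (by norm_num)] at this
              have hlogL : Nat.log 2 ((N v).card) = L := by omega
              constructor
              · rw [hi]
                calc 2 ^ (L-1) ≤ 2 ^ L := Nat.pow_le_pow_right (by norm_num) (by omega)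
                  _ = 2 ^ Nat.log 2 ((N v).card) := by rw [hlogL]
                  _ ≤ (N v).card := Nat.pow_log_le_self 2 hd
              · rw [hi]
                have : L - 1 + 1 = L := by omega
                rw [this]
                exact hdB
          calc ((N v).card : ℝ) ^ p
              = if v ∈ C i₀ then ((N v).card : ℝ) ^ p else 0 := by rw [if_pos hmem]
            _ ≤ _ := Finset.single_le_sum (f := fun i => if v ∈ C i then ((N v).card : ℝ) ^ p else 0)
                (fun i _ => hite v i) (Finset.mem_range.mpr hiL)
      calc S ≤ ∑ v, ∑ i ∈ Finset.range L, (if v ∈ C i then ((N v).card : ℝ) ^ p else 0) :=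
            Finset.sum_le_sum fun v _ => hpt v
        _ = ∑ i ∈ Finset.range L, ∑ v, (if v ∈ C i then ((N v).card : ℝ) ^ p else 0) :=
            Finset.sum_comm
        _ = ∑ i ∈ Finset.range L, ∑ v ∈ C i, ((N v).card : ℝ) ^ p := by
            refine Finset.sum_congr rfl fun i _ => ?_
            simp [Finset.sum_ite_mem]
    -- pigeonhole
    have hpig : ∃ i ∈ Finset.range L, S / L ≤ ∑ v ∈ C i, ((N v).card : ℝ) ^ p := by
      by_contra hcon
      push_neg at hcon
      have : ∑ i ∈ Finset.range L, ∑ v ∈ C i, ((N v).card : ℝ) ^ p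
          < ∑ i ∈ Finset.range L, S / L := by
        apply Finset.sum_lt_sum_of_nonempty
        · exact ⟨0, Finset.mem_range.mpr (by omega)⟩
        · exact fun i hi => hcon i hi
      rw [Finset.sum_const, Finset.card_range, nsmul_eq_mul,
        mul_div_cancel₀ _ (ne_of_gt hLpos)] at this
      linarith
    obtain ⟨i, _, hTi⟩ := hpig
    refine ⟨C i, ?_, ?_⟩
    · by_contra hne
      rw [Finset.not_nonempty_iff_eq_empty] at hne
      rw [hne, Finset.sum_empty] at hTi
      have : 0 < S / L := div_pos hSpos hLpos
      linarith
    · -- main estimate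
      have hUne : (C i).Nonempty := by
        by_contra hne
        rw [Finset.not_nonempty_iff_eq_empty] at hne
        rw [hne, Finset.sum_empty] at hTi
        have : 0 < S / L := div_pos hSpos hLpos
        linarith
      have hUpos : (0:ℝ) < (C i).card := by exact_mod_cast Finset.card_pos.mpr hUne
      -- upper bound on class sum
      have hTub : ∑ v ∈ C i, ((N v).card : ℝ) ^ p ≤ (C i).card * ((2:ℝ) ^ (i+1)) ^ p := by
        calc ∑ v ∈ C i, ((N v).card : ℝ) ^ p ≤ ∑ _v ∈ C i, ((2:ℝ) ^ (i+1)) ^ p := by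
              apply Finset.sum_le_sum
              intro v hv
              rw [hC] at hv
              simp only [Finset.mem_filter] at hv
              apply Real.rpow_le_rpow (by positivity) _ (le_of_lt hp0)
              exact_mod_cast hv.2.2
          _ = (C i).card * ((2:ℝ) ^ (i+1)) ^ p := by
              rw [Finset.sum_const, nsmul_eq_mul]
      -- lower bound on degree sum
      have hdlb : ((C i).card : ℝ) * (2:ℝ) ^ i ≤ ∑ v ∈ C i, ((N v).card : ℝ) := by
        calc ((C i).card : ℝ) * (2:ℝ) ^ i = ∑ _v ∈ C i, (2:ℝ) ^ i := by
              rw [Finset.sum_const, nsmul_eq_mul]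
          _ ≤ ∑ v ∈ C i, ((N v).card : ℝ) := by
              apply Finset.sum_le_sum
              intro v hv
              rw [hC] at hv
              simp only [Finset.mem_filter] at hv
              exact_mod_cast hv.2.1
      -- from hTi and hTub : (2^{i+1})^p ≥ S/(L * |U|)
      have hUnn : (0:ℝ) ≤ (C i).card := Nat.cast_nonneg _
      have hkey : (S / ((L:ℝ) * (C i).card)) ^ (1/p) ≤ (2:ℝ) ^ (i+1) := by
        have h1 : S / ((L:ℝ) * (C i).card) ≤ ((2:ℝ) ^ (i+1)) ^ p := by
          rw [div_le_iff₀ (mul_pos hLpos hUpos)]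
          calc S = (S / L) * L := by field_simp
            _ ≤ (∑ v ∈ C i, ((N v).card : ℝ) ^ p) * L := by
                apply mul_le_mul_of_nonneg_right hTi (le_of_lt hLpos)
            _ ≤ ((C i).card * ((2:ℝ) ^ (i+1)) ^ p) * L := by
                apply mul_le_mul_of_nonneg_right hTub (le_of_lt hLpos)
            _ = ((2:ℝ) ^ (i+1)) ^ p * ((L:ℝ) * (C i).card) := by ring
        have hnum : (0:ℝ) ≤ S / ((L:ℝ) * (C i).card) :=
          div_nonneg hSnn (mul_nonneg (le_of_lt hLpos) hUnn)
        calc (S / ((L:ℝ) * (C i).card)) ^ (1/p)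
            ≤ (((2:ℝ) ^ (i+1)) ^ p) ^ (1/p) :=
              Real.rpow_le_rpow hnum h1 (le_of_lt (by positivity))
          _ = (2:ℝ) ^ (i+1) := by
              rw [← Real.rpow_natCast ((2:ℝ)) (i+1),
                ← Real.rpow_mul (by norm_num : (0:ℝ) ≤ 2),
                ← Real.rpow_mul (by norm_num : (0:ℝ) ≤ 2),
                mul_assoc, mul_one_div, div_self hpne, mul_one]
      -- assemble
      rw [ge_iff_le, hLcast]
      calc ((C i).card : ℝ) ^ (1 - 1/p) / 2 * (S / (L:ℝ)) ^ (1/p)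
          = ((C i).card : ℝ) / 2 * ((S / (L:ℝ)) ^ (1/p) / ((C i).card : ℝ) ^ (1/p)) := by
            rw [Real.rpow_sub hUpos, Real.rpow_one]; ring
        _ = ((C i).card : ℝ) / 2 * (S / ((L:ℝ) * (C i).card)) ^ (1/p) := by
            rw [← Real.div_rpow (div_nonneg hSnn (le_of_lt hLpos)) hUnn, div_div]
        _ ≤ ((C i).card : ℝ) / 2 * (2:ℝ) ^ (i+1) :=
            mul_le_mul_of_nonneg_left hkey (div_nonneg hUnn (by norm_num))
        _ = ((C i).card : ℝ) * (2:ℝ) ^ i := by rw [pow_succ]; ring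
        _ ≤ ∑ v ∈ C i, ((N v).card : ℝ) := hdlb
end

section
/- Every graph G satisfies W₄(G) ≥ (‖G‖_{3/2})² / |V(G)|, where W₄(G) = Σ_{uv∈E(G)} 2·d(u)·d(v) counts walks of length 3 (equivalently, Σ over ordered edges (u,v) of d(u)d(v)) and ‖G‖_{3/2} = Σ_v d(v)^{3/2}. -/
open Finset

def walkEquiv {V : Type*} (G : SimpleGraph V) :
    {w : Fin 4 → V // ∀ i : Fin 3, G.Adj (w i.castSucc) (w i.succ)} ≃
      Σ p : {p : V × V // G.Adj p.1 p.2}, G.neighborSet p.1.1 × G.neighborSet p.1.2 where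
  toFun w := ⟨⟨(w.1 1, w.1 2), w.2 1⟩, ⟨w.1 0, (w.2 0).symm⟩, ⟨w.1 3, w.2 2⟩⟩
  invFun x := ⟨![x.2.1.1, x.1.1.1, x.1.1.2, x.2.2.1], by
    intro i
    fin_cases i
    · exact x.2.1.2.symm
    · exact x.1.2
    · exact x.2.2.2⟩
  left_inv w := by
    ext i
    fin_cases i <;> rfl
  right_inv x := rfl

lemma count_walks {V : Type*} [Fintype V] [DecidableEq V] (G : SimpleGraph V)
    [DecidableRel G.Adj] :
    (Fintype.card {w : Fin 4 → V // ∀ i : Fin 3, G.Adj (w i.castSucc) (w i.succ)}) =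
      ∑ p ∈ univ.filter (fun p : V × V => G.Adj p.1 p.2), G.degree p.1 * G.degree p.2 := by
  rw [Fintype.card_congr (walkEquiv G), Fintype.card_sigma]
  rw [Finset.sum_subtype (univ.filter (fun p : V × V => G.Adj p.1 p.2))
    (p := fun p : V × V => G.Adj p.1 p.2) (by simp)]
  congr 1
  ext p
  simp [Fintype.card_prod, SimpleGraph.degree, SimpleGraph.neighborFinset_eq_filter]

/-- `W₄(G) ≥ ‖G‖_{3/2}² / |V(G)|`, where `W₄(G)` is the number of walks with `4`
vertices and `‖G‖_{3/2} = ∑_v d(v)^{3/2}`. -/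
theorem stmt_9 {V : Type*} [Fintype V] [DecidableEq V] (G : SimpleGraph V)
    [DecidableRel G.Adj] :
    ((Fintype.card {w : Fin 4 → V // ∀ i : Fin 3, G.Adj (w i.castSucc) (w i.succ)}) : ℝ) ≥
      (∑ v, (G.degree v : ℝ) ^ ((3 : ℝ) / 2)) ^ 2 / (Fintype.card V : ℝ) := by
  classical
  set D : V → ℝ := fun v => (G.degree v : ℝ) with hD
  have hDnn : ∀ v, 0 ≤ D v := fun v => Nat.cast_nonneg _
  set E : Finset (V × V) := univ.filter (fun p : V × V => G.Adj p.1 p.2) with hE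
  set W : ℝ := ∑ p ∈ E, D p.1 * D p.2 with hW
  have hWnn : 0 ≤ W := Finset.sum_nonneg fun p _ => mul_nonneg (hDnn _) (hDnn _)
  have hcard : ((Fintype.card {w : Fin 4 → V // ∀ i : Fin 3,
      G.Adj (w i.castSucc) (w i.succ)}) : ℝ) = W := by
    rw [count_walks]
    push_cast
    rfl
  rw [hcard, ge_iff_le]
  -- the ℓ^{3/2} norm as a sum over ordered edges
  have hpow : ∀ v, D v ^ ((3:ℝ)/2) = D v * Real.sqrt (D v) := by
    intro v
    rcases eq_or_lt_of_le (hDnn v) with h | h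
    · rw [← h, Real.zero_rpow (by norm_num), Real.sqrt_zero, mul_zero]
    · rw [Real.sqrt_eq_rpow, ← Real.rpow_one_add' (le_of_lt h) (by norm_num)]
      norm_num
  have hdegsum : ∀ c : V, ∑ b, (if G.Adj b c then Real.sqrt (D c) else 0)
      = D c * Real.sqrt (D c) := by
    intro c
    rw [← Finset.sum_filter, Finset.sum_const, nsmul_eq_mul]
    congr 1
    simp only [hD, SimpleGraph.degree, SimpleGraph.neighborFinset_eq_filter]
    norm_cast
    apply Finset.card_bij (fun b _ => b) <;> simp [SimpleGraph.adj_comm]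
  have hS : ∑ v, D v ^ ((3:ℝ)/2) = ∑ p ∈ E, Real.sqrt (D p.2) := by
    rw [hE, Finset.sum_filter, Fintype.sum_prod_type, Finset.sum_comm]
    simp only [hdegsum, hpow]
  set T : ℝ := ∑ p ∈ E, 1 / D p.1 with hT
  -- Cauchy–Schwarz
  have hCS : (∑ v, D v ^ ((3:ℝ)/2)) ^ 2 ≤ W * T := by
    have key := Finset.sum_mul_sq_le_sq_mul_sq E
      (fun p => Real.sqrt (D p.1 * D p.2)) (fun p => 1 / Real.sqrt (D p.1))
    have h1 : ∀ p ∈ E, Real.sqrt (D p.1 * D p.2) * (1 / Real.sqrt (D p.1))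
        = Real.sqrt (D p.2) := by
      intro p hp
      have hadj : G.Adj p.1 p.2 := by simpa [hE] using hp
      have hpos : 0 < D p.1 := by
        simp only [hD]
        exact_mod_cast G.degree_pos_iff_exists_adj p.1 |>.2 ⟨p.2, hadj⟩
      rw [Real.sqrt_mul (hDnn _)]
      field_simp
    have h2 : ∀ p ∈ E, Real.sqrt (D p.1 * D p.2) ^ 2 = D p.1 * D p.2 := by
      intro p _
      exact Real.sq_sqrt (mul_nonneg (hDnn _) (hDnn _))
    have h3 : ∀ p ∈ E, (1 / Real.sqrt (D p.1)) ^ 2 = 1 / D p.1 := by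
      intro p _
      rw [div_pow, one_pow, Real.sq_sqrt (hDnn _)]
    rw [Finset.sum_congr rfl h1, Finset.sum_congr rfl h2, Finset.sum_congr rfl h3] at key
    rw [hS, hW, hT]
    exact key
  have hT_le : T ≤ (Fintype.card V : ℝ) := by
    have : T = ∑ b : V, ∑ c : V, (if G.Adj b c then 1 / D b else 0) := by
      rw [hT, hE, Finset.sum_filter, Fintype.sum_prod_type]
    rw [this]
    calc ∑ b : V, ∑ c : V, (if G.Adj b c then 1 / D b else 0)
        ≤ ∑ _b : V, (1 : ℝ) := by
          apply Finset.sum_le_sum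
          intro b _
          rw [← Finset.sum_filter, Finset.sum_const, nsmul_eq_mul]
          have hcard2 : ((univ.filter (fun c => G.Adj b c)).card : ℝ) = D b := by
            simp [hD, SimpleGraph.degree, SimpleGraph.neighborFinset_eq_filter]
          rw [hcard2]
          rcases eq_or_lt_of_le (hDnn b) with h | h
          · rw [← h]; simp
          · rw [mul_one_div, div_self (ne_of_gt h)]
      _ = (Fintype.card V : ℝ) := by simp
  rcases Nat.eq_zero_or_pos (Fintype.card V) with h0 | h0
  · rw [h0]
    simp [hWnn]
  · rw [div_le_iff₀ (by exact_mod_cast h0)]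
    calc (∑ v, D v ^ ((3:ℝ)/2)) ^ 2 ≤ W * T := hCS
      _ ≤ W * (Fintype.card V : ℝ) := mul_le_mul_of_nonneg_left hT_le hWnn
end

section
/- Let G be a graph on n vertices with edge set E. Then Σ over ordered adjacent pairs (u,v) of d(u)·d(v) is at least (Σ_v d(v)^{3/2})² / n. -/
open Finset SimpleGraph

/-- For a graph `G` on `n` vertices, the sum over ordered adjacent pairs `(u,v)` of
`d(u)·d(v)` is at least `(∑_v d(v)^{3/2})² / n`. -/
theorem stmt_10 {V : Type*} [Fintype V] (G : SimpleGraph V) [DecidableRel G.Adj] :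
    ∑ u, ∑ v ∈ G.neighborFinset u, (G.degree u : ℝ) * (G.degree v : ℝ) ≥
      (∑ v, (G.degree v : ℝ) ^ ((3 : ℝ) / 2)) ^ 2 / (Fintype.card V : ℝ) := by
  classical
  set d : V → ℝ := fun v => (G.degree v : ℝ) with hd
  have hd0 : ∀ v, 0 ≤ d v := fun v => Nat.cast_nonneg _
  -- symmetry of the double sum over adjacent pairs
  have hswap : ∀ f : V → V → ℝ,
      ∑ u, ∑ v ∈ G.neighborFinset u, f u v = ∑ v, ∑ u ∈ G.neighborFinset v, f u v := by
    intro f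
    simp only [neighborFinset_eq_filter, Finset.sum_filter]
    rw [Finset.sum_comm]
    exact Finset.sum_congr rfl fun v _ => Finset.sum_congr rfl fun u _ =>
      if_congr (G.adj_comm u v) rfl rfl
  set s : Finset ((_ : V) × V) := Finset.univ.sigma (fun u => G.neighborFinset u) with hs
  have hmem : ∀ x ∈ s, G.Adj x.1 x.2 := by
    intro x hx
    rw [hs, Finset.mem_sigma] at hx
    exact (SimpleGraph.mem_neighborFinset _ _ _).1 hx.2
  have hpos2 : ∀ x ∈ s, 0 < d x.2 := by
    intro x hx
    have : 0 < G.degree x.2 := G.degree_pos_iff_exists_adj x.2 |>.2 ⟨x.1, (hmem x hx).symm⟩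
    simp only [hd]
    exact_mod_cast this
  -- Cauchy-Schwarz
  have key : (∑ x ∈ s, Real.sqrt (d x.1)) ^ 2 ≤
      (∑ x ∈ s, d x.1 * d x.2) * ∑ x ∈ s, 1 / d x.2 := by
    refine Finset.sum_sq_le_sum_mul_sum_of_sq_eq_mul s
      (fun x hx => mul_nonneg (hd0 _) (hd0 _))
      (fun x hx => by positivity) (fun x hx => ?_)
    rw [Real.sq_sqrt (hd0 _)]
    field_simp [(hpos2 x hx).ne']
  -- identify the three sums
  have h1 : ∑ x ∈ s, Real.sqrt (d x.1) = ∑ v, d v ^ ((3 : ℝ) / 2) := by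
    rw [hs, ← Finset.sum_sigma' Finset.univ (fun u => G.neighborFinset u) (fun a _ => Real.sqrt (d a))]
    refine Finset.sum_congr rfl fun u _ => ?_
    rw [Finset.sum_const, G.card_neighborFinset_eq_degree, nsmul_eq_mul]
    rw [show ((3 : ℝ) / 2) = 1 + 1 / 2 by norm_num,
      Real.rpow_add' (hd0 u) (by norm_num), Real.rpow_one, ← Real.sqrt_eq_rpow]
  have h2 : ∑ x ∈ s, d x.1 * d x.2 = ∑ u, ∑ v ∈ G.neighborFinset u, d u * d v := by
    rw [hs]
    exact (Finset.sum_sigma' Finset.univ (fun u => G.neighborFinset u) (fun a b => d a * d b)).symm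
  have h3 : ∑ x ∈ s, 1 / d x.2 ≤ (Fintype.card V : ℝ) := by
    rw [hs, ← Finset.sum_sigma' Finset.univ (fun u => G.neighborFinset u) (fun _ b => 1 / d b)]
    calc ∑ u, ∑ v ∈ G.neighborFinset u, 1 / d v
        = ∑ v, ∑ _u ∈ G.neighborFinset v, 1 / d v := hswap _
      _ = ∑ v, d v * (1 / d v) := by
          refine Finset.sum_congr rfl fun v _ => ?_
          rw [Finset.sum_const, G.card_neighborFinset_eq_degree, nsmul_eq_mul]
      _ ≤ ∑ _v : V, (1 : ℝ) := by
          refine Finset.sum_le_sum fun v _ => ?_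
          rcases eq_or_lt_of_le (hd0 v) with h | h
          · simp [← h]
          · rw [mul_one_div, div_self h.ne']
      _ = (Fintype.card V : ℝ) := by simp
  have hS0 : 0 ≤ ∑ u, ∑ v ∈ G.neighborFinset u, d u * d v :=
    Finset.sum_nonneg fun u _ => Finset.sum_nonneg fun v _ => mul_nonneg (hd0 _) (hd0 _)
  rw [ge_iff_le]
  rcases Nat.eq_zero_or_pos (Fintype.card V) with hn | hn
  · simp [hn, hS0]; exact hS0
  · have hn' : (0 : ℝ) < Fintype.card V := by exact_mod_cast hn
    rw [div_le_iff₀ hn']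
    calc (∑ v, d v ^ ((3 : ℝ) / 2)) ^ 2
        = (∑ x ∈ s, Real.sqrt (d x.1)) ^ 2 := by rw [h1]
      _ ≤ (∑ x ∈ s, d x.1 * d x.2) * ∑ x ∈ s, 1 / d x.2 := key
      _ ≤ (∑ u, ∑ v ∈ G.neighborFinset u, d u * d v) * (Fintype.card V : ℝ) := by
          rw [h2]; exact mul_le_mul_of_nonneg_left h3 hS0
end

section
/- Let F be a family of graphs. Suppose ex(n, F) ≤ C·n^{1+α} for all n ≥ N₀, where C > 0 and α ∈ (0,1). Then for all n ≥ m ≥ max(N₀, some constant), every F-free bipartite graph G with parts A of size m and B of size n satisfies |E(G)| ≤ 2^{2+α}·C·m^α·n. (Semibipartite Turán bound derived from the ordinary Turán bound by random sampling.) -/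
/-- `F` is contained in `G` as a subgraph: there is an injective map preserving adjacency. -/
def ContainsCopy {α β : Type*} (F : SimpleGraph α) (G : SimpleGraph β) : Prop :=
  ∃ f : α ↪ β, ∀ a b, F.Adj a b → G.Adj (f a) (f b)

/-- Embedding of `Fin m ⊕ Fin m` into `Fin m ⊕ Fin n`, shifting the right part by `j*m` mod `n`. -/
def psiMap (m n j : ℕ) (hn : 0 < n) (hmn : m ≤ n) : Fin m ⊕ Fin m ↪ Fin m ⊕ Fin n where
  toFun := Sum.elim Sum.inl fun r => Sum.inr ⟨(j * m + r.val) % n, Nat.mod_lt _ hn⟩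
  inj' := by
    rintro (a | r) (a' | r') h <;>
      simp only [Sum.elim_inl, Sum.elim_inr, Sum.inl.injEq, Sum.inr.injEq, Fin.mk.injEq] at h
    · exact congrArg Sum.inl h
    · simp at h
    · simp at h
    · have h2 : (r : ℕ) ≡ (r' : ℕ) [MOD n] := Nat.ModEq.add_left_cancel' (j * m) h
      have hr : (r : ℕ) = (r' : ℕ) := by
        rwa [Nat.ModEq, Nat.mod_eq_of_lt (lt_of_lt_of_le r.isLt hmn),
          Nat.mod_eq_of_lt (lt_of_lt_of_le r'.isLt hmn)] at h2
      exact congrArg Sum.inr (Fin.ext hr)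

/-- The subgraph of `G` consisting of the edges `{inl a, inr b}` with `b/m = j`. -/
def Hgraph {m n : ℕ} (G : SimpleGraph (Fin m ⊕ Fin n)) (j : ℕ) :
    SimpleGraph (Fin m ⊕ Fin n) where
  Adj x y :=
    match x, y with
    | Sum.inl a, Sum.inr b => G.Adj (Sum.inl a) (Sum.inr b) ∧ b.val / m = j
    | Sum.inr b, Sum.inl a => G.Adj (Sum.inr b) (Sum.inl a) ∧ b.val / m = j
    | _, _ => False
  symm := by
    constructor
    rintro (a | b) (a' | b') h
    · exact h.elim
    · exact ⟨h.1.symm, h.2⟩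
    · exact ⟨h.1.symm, h.2⟩
    · exact h.elim
  loopless := by constructor; rintro (a | b) h <;> exact h

lemma Hgraph_le {m n : ℕ} (G : SimpleGraph (Fin m ⊕ Fin n)) (j : ℕ) {x y : Fin m ⊕ Fin n}
    (h : (Hgraph G j).Adj x y) : G.Adj x y := by
  rcases x with a | b <;> rcases y with a' | b'
  · exact h.elim
  · exact h.1
  · exact h.1
  · exact h.elim

lemma ncard_biUnion_le' {γ : Type*} [Finite γ] (s : Finset ℕ) (f : ℕ → Set γ) :
    (⋃ j ∈ s, f j).ncard ≤ ∑ j ∈ s, (f j).ncard := by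
  classical
  induction s using Finset.induction_on with
  | empty => simp
  | @insert a s ha ih =>
    rw [Finset.sum_insert ha, Finset.set_biUnion_insert]
    exact le_trans (Set.ncard_union_le _ _) (add_le_add_right ih _)

/-- Semibipartite Turán bound: if `ex(k,F) ≤ C·k^{1+α}` for all `k ≥ N₀` (with `C > 0`,
`α ∈ (0,1)`), then there is a constant `M` such that for all `n ≥ m ≥ max(N₀, M)` every
`F`-free bipartite graph with parts of sizes `m` and `n` has at most `2^{2+α}·C·m^α·n`
edges. -/
theorem stmt_13 {ι : Type*} {β : ι → Type*} (F : ∀ i, SimpleGraph (β i))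
    (C α : ℝ) (hC : 0 < C) (hα : α ∈ Set.Ioo (0 : ℝ) 1) (N₀ : ℕ)
    (hex : ∀ k : ℕ, N₀ ≤ k → ∀ G : SimpleGraph (Fin k),
      (∀ i, ¬ ContainsCopy (F i) G) → (G.edgeSet.ncard : ℝ) ≤ C * (k : ℝ) ^ (1 + α)) :
    ∃ M : ℕ, ∀ m n : ℕ, N₀ ≤ m → M ≤ m → m ≤ n →
      ∀ G : SimpleGraph (Fin m ⊕ Fin n),
        (∀ a a', ¬ G.Adj (Sum.inl a) (Sum.inl a')) →
        (∀ b b', ¬ G.Adj (Sum.inr b) (Sum.inr b')) →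
        (∀ i, ¬ ContainsCopy (F i) G) →
        (G.edgeSet.ncard : ℝ) ≤ (2 : ℝ) ^ ((2 : ℝ) + α) * C * (m : ℝ) ^ α * (n : ℝ) := by
  refine ⟨1, fun m n hN₀ hM hmn G hA hB hF => ?_⟩
  have hm : 0 < m := hM
  have hn : 0 < n := lt_of_lt_of_le hm hmn
  set t : ℕ := (n - 1) / m + 1 with ht_def
  set ψ : ℕ → (Fin m ⊕ Fin m ↪ Fin m ⊕ Fin n) := fun j => psiMap m n j hn hmn with hψ_def
  set H : ℕ → SimpleGraph (Fin m ⊕ Fin n) := fun j => Hgraph G j with hH_def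
  set K : ℕ → SimpleGraph (Fin m ⊕ Fin m) := fun j => (H j).comap (ψ j) with hK_def
  -- the edge set of H j is the ψ j-image of the edge set of K j
  have himg : ∀ j, (H j).edgeSet = Sym2.map (ψ j) '' (K j).edgeSet := by
    intro j
    apply Set.Subset.antisymm
    · have hcase : ∀ (a : Fin m) (b : Fin n), G.Adj (Sum.inl a) (Sum.inr b) → b.val / m = j →
          s(Sum.inl a, Sum.inr b) ∈ Sym2.map (ψ j) '' (K j).edgeSet := by
        intro a b hadj hj
        have hbr : (ψ j) (Sum.inr ⟨b.val % m, Nat.mod_lt _ hm⟩) = Sum.inr b := by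
          have key : (j * m + b.val % m) % n = b.val := by
            rw [← hj, Nat.div_add_mod']
            exact Nat.mod_eq_of_lt b.isLt
          simp only [hψ_def, psiMap, Function.Embedding.coeFn_mk, Sum.elim_inr]
          exact congrArg Sum.inr (Fin.ext key)
        have hbl : (ψ j) (Sum.inl a) = Sum.inl a := rfl
        refine ⟨s(Sum.inl a, Sum.inr ⟨b.val % m, Nat.mod_lt _ hm⟩), ?_, ?_⟩
        · rw [SimpleGraph.mem_edgeSet]
          show (H j).Adj ((ψ j) (Sum.inl a)) ((ψ j) (Sum.inr ⟨b.val % m, Nat.mod_lt _ hm⟩))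
          rw [hbl, hbr]
          exact ⟨hadj, hj⟩
        · rw [Sym2.map_pair_eq, hbl, hbr]
      intro e
      refine Sym2.ind (fun x y he => ?_) e
      rw [SimpleGraph.mem_edgeSet] at he
      rcases x with a | b <;> rcases y with a' | b'
      · exact he.elim
      · exact hcase a b' he.1 he.2
      · rw [Sym2.eq_swap]; exact hcase a' b he.1.symm he.2
      · exact he.elim
    · rintro e ⟨e', he', rfl⟩
      exact (SimpleGraph.Hom.comap (ψ j) (H j)).map_mem_edgeSet he'
  have hncard : ∀ j, (H j).edgeSet.ncard = (K j).edgeSet.ncard := by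
    intro j
    rw [himg j, Set.ncard_image_of_injective _ (Sym2.map.injective (ψ j).injective)]
  -- bound each block using hex
  have hblock : ∀ j, ((H j).edgeSet.ncard : ℝ) ≤ C * ((m + m : ℕ) : ℝ) ^ (1 + α) := by
    intro j
    set K' : SimpleGraph (Fin (m + m)) :=
      (K j).comap (finSumFinEquiv (m := m) (n := m)).symm.toEmbedding with hK'_def
    have iso : K' ≃g K j := SimpleGraph.Iso.comap finSumFinEquiv.symm (K j)
    have hcard : (H j).edgeSet.ncard = K'.edgeSet.ncard := by
      rw [hncard j, ← Nat.card_coe_set_eq, ← Nat.card_coe_set_eq]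
      exact (Nat.card_congr iso.mapEdgeSet).symm
    have hfree : ∀ i, ¬ ContainsCopy (F i) K' := by
      intro i ⟨f, hf⟩
      refine hF i ⟨(f.trans finSumFinEquiv.symm.toEmbedding).trans (ψ j), fun a b hab => ?_⟩
      have h1 : K'.Adj (f a) (f b) := hf a b hab
      have h2 : (K j).Adj (finSumFinEquiv.symm (f a)) (finSumFinEquiv.symm (f b)) := h1
      have h3 : (H j).Adj ((ψ j) (finSumFinEquiv.symm (f a)))
          ((ψ j) (finSumFinEquiv.symm (f b))) := h2
      exact Hgraph_le G j h3
    rw [hcard]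
    exact hex (m + m) (le_trans hN₀ (Nat.le_add_right m m)) K' hfree
  -- the edge sets of the H j cover the edge set of G
  have hcover : G.edgeSet ⊆ ⋃ j ∈ Finset.range t, (H j).edgeSet := by
    have hmem : ∀ (a : Fin m) (b : Fin n),
        G.Adj (Sum.inl a) (Sum.inr b) → s(Sum.inl a, Sum.inr b) ∈
          ⋃ j ∈ Finset.range t, (H j).edgeSet := by
      intro a b hadj
      have hjt : b.val / m < t := by
        have : b.val / m ≤ (n - 1) / m :=
          Nat.div_le_div_right (Nat.le_sub_one_of_lt b.isLt)
        omega
      refine Set.mem_biUnion (Finset.mem_range.mpr hjt) ?_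
      rw [SimpleGraph.mem_edgeSet]
      exact ⟨hadj, rfl⟩
    intro e
    refine Sym2.ind (fun x y he => ?_) e
    rw [SimpleGraph.mem_edgeSet] at he
    rcases x with a | b <;> rcases y with a' | b'
    · exact absurd he (hA a a')
    · exact hmem a b' he
    · rw [Sym2.eq_swap]; exact hmem a' b he.symm
    · exact absurd he (hB b b')
  have hsum : G.edgeSet.ncard ≤ ∑ j ∈ Finset.range t, (H j).edgeSet.ncard :=
    le_trans (Set.ncard_le_ncard hcover (Set.toFinite _)) (ncard_biUnion_le' _ _)
  have hmR : (0 : ℝ) < (m : ℝ) := by exact_mod_cast hm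
  have ht : (t : ℝ) ≤ 2 * (n : ℝ) / (m : ℝ) := by
    have h1 : (((n - 1) / m : ℕ) : ℝ) ≤ (n : ℝ) / (m : ℝ) := by
      refine le_trans Nat.cast_div_le ?_
      gcongr
      exact_mod_cast Nat.sub_le n 1
    have h2 : (1 : ℝ) ≤ (n : ℝ) / (m : ℝ) := by
      rw [one_le_div hmR]
      exact_mod_cast hmn
    have : (t : ℝ) = (((n - 1) / m : ℕ) : ℝ) + 1 := by push_cast [ht_def]; ring
    rw [this]
    calc (((n - 1) / m : ℕ) : ℝ) + 1 ≤ (n : ℝ) / m + (n : ℝ) / m := add_le_add h1 h2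
    _ = 2 * (n : ℝ) / m := by ring
  have hpos : (0 : ℝ) ≤ C * ((m + m : ℕ) : ℝ) ^ (1 + α) := by positivity
  calc (G.edgeSet.ncard : ℝ)
      ≤ ((∑ j ∈ Finset.range t, (H j).edgeSet.ncard : ℕ) : ℝ) := by exact_mod_cast hsum
    _ = ∑ j ∈ Finset.range t, ((H j).edgeSet.ncard : ℝ) := by push_cast; ring
    _ ≤ ∑ _j ∈ Finset.range t, C * ((m + m : ℕ) : ℝ) ^ (1 + α) :=
        Finset.sum_le_sum fun j _ => hblock j
    _ = (t : ℝ) * (C * ((m + m : ℕ) : ℝ) ^ (1 + α)) := by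
        rw [Finset.sum_const, Finset.card_range, nsmul_eq_mul]
    _ ≤ (2 * (n : ℝ) / m) * (C * ((m + m : ℕ) : ℝ) ^ (1 + α)) :=
        mul_le_mul_of_nonneg_right ht hpos
    _ = (2 : ℝ) ^ ((2 : ℝ) + α) * C * (m : ℝ) ^ α * (n : ℝ) := by
        have hmm : ((m + m : ℕ) : ℝ) = 2 * (m : ℝ) := by push_cast; ring
        have hmα : (m : ℝ) ^ ((1 : ℝ) + α) = (m : ℝ) * (m : ℝ) ^ α := by
          rw [Real.rpow_add hmR, Real.rpow_one]
        have h2α : (2 : ℝ) ^ ((2 : ℝ) + α) = 2 * (2 : ℝ) ^ ((1 : ℝ) + α) := by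
          rw [show (2 : ℝ) + α = 1 + (1 + α) by ring, Real.rpow_add (by norm_num : (0:ℝ) < 2),
            Real.rpow_one]
        rw [hmm, Real.mul_rpow (by norm_num) (le_of_lt hmR), hmα, h2α]
        field_simp
end

section
/- Let s ≥ 1 and let F be a bipartite graph with parts W₁, W₂ such that every vertex in W₂ has degree at most s in F. Let t = |W₂| and C = 2(|V(F)|^s/s! + |V(F)|). Then for n sufficiently large, every bipartite graph G with parts V₁, V₂ of size n each satisfying Σ_{v∈V₁} d(v)^s ≥ (C/2)·n^s contains a set X' ⊆ V₁ with |X'| ≥ t such that every s-subset of X' has at least t common neighbors in V₂; consequently G contains a copy of F. -/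
open Finset

/-- Counting tuples all of whose coordinates lie in a fixed set. -/
lemma drc_pi_card {n s : ℕ} (M : Finset (Fin n)) :
    (Finset.univ.filter (fun u : Fin s → Fin n => ∀ i, u i ∈ M)).card = M.card ^ s := by
  have h : Finset.univ.filter (fun u : Fin s → Fin n => ∀ i, u i ∈ M)
      = Fintype.piFinset (fun _ : Fin s => M) := by
    ext u; simp [Fintype.mem_piFinset]
  rw [h, Fintype.card_piFinset]
  simp

/-- Double counting. -/
lemma drc_sum_comm {β γ : Type*} (B : Finset β) (S : Finset γ)
    (P : β → γ → Prop) [∀ b c, Decidable (P b c)] :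
    ∑ c ∈ S, (B.filter (fun b => P b c)).card = ∑ b ∈ B, (S.filter (fun c => P b c)).card := by
  simp_rw [Finset.card_filter]
  exact Finset.sum_comm

/-- Greedy embedding of the second part. -/
lemma drc_greedy {α : Type*} [Fintype α] [DecidableEq α] {n s : ℕ} (hn : 0 < n)
    (F : SimpleGraph α) [DecidableRel F.Adj] (W₂ : Finset α)
    (hbip : ∀ u v, F.Adj u v → (u ∈ W₂ ↔ v ∉ W₂))
    (hdeg : ∀ v ∈ W₂, F.degree v ≤ s)
    (G : SimpleGraph (Fin n ⊕ Fin n)) [DecidableRel G.Adj]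
    (X' : Finset (Fin n)) (hX'card : Fintype.card α ≤ X'.card)
    (hX' : ∀ T ⊆ X', T.card = min s (Fintype.card α) →
      Fintype.card α ≤ (Finset.univ.filter
        (fun b : Fin n => ∀ x ∈ T, G.Adj (.inl x) (.inr b))).card)
    (g : α → Fin n) (hg2 : ∀ w ∉ W₂, g w ∈ X') :
    ∀ S : Finset α, S ⊆ W₂ → ∃ h : α → Fin n, Set.InjOn h S ∧
      ∀ v ∈ S, ∀ w, F.Adj v w → G.Adj (.inl (g w)) (.inr (h v)) := by
  classical
  intro S
  induction S using Finset.induction_on with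
  | empty => intro _; exact ⟨fun _ => ⟨0, hn⟩, by simp, by simp⟩
  | @insert v S hvS ih =>
    intro hins
    have hvW : v ∈ W₂ := hins (Finset.mem_insert_self v S)
    have hSW : S ⊆ W₂ := fun x hx => hins (Finset.mem_insert_of_mem hx)
    obtain ⟨h', hinj', hadj'⟩ := ih hSW
    -- images of the F-neighbors of v
    set T₀ : Finset (Fin n) := (F.neighborFinset v).image g with hT₀
    have hnbW : ∀ w ∈ F.neighborFinset v, w ∉ W₂ := by
      intro w hw
      have hadj : F.Adj v w := by simpa using hw
      exact (hbip v w hadj).mp hvW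
    have hT₀X' : T₀ ⊆ X' := by
      intro x hx
      obtain ⟨w, hw, rfl⟩ := Finset.mem_image.mp hx
      exact hg2 w (hnbW w hw)
    have hT₀card : T₀.card ≤ min s (Fintype.card α) := by
      refine le_min ?_ ?_
      · exact le_trans (Finset.card_image_le) (hdeg v hvW)
      · exact le_trans (Finset.card_image_le) (Finset.card_le_univ _)
    have hminle : min s (Fintype.card α) ≤ X'.card :=
      le_trans (min_le_right _ _) hX'card
    obtain ⟨T, hT₀T, hTX', hTcard⟩ :=
      Finset.exists_subsuperset_card_eq hT₀X' hT₀card hminle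
    have hCN := hX' T hTX' hTcard
    set CNT := Finset.univ.filter
      (fun b : Fin n => ∀ x ∈ T, G.Adj (.inl x) (.inr b)) with hCNT
    -- the already-used vertices
    set used : Finset (Fin n) := S.image h' with hused
    have husedcard : used.card < Fintype.card α := by
      have h1 : used.card ≤ S.card := Finset.card_image_le
      have h2 : S.card < W₂.card := by
        have : S ⊆ W₂.erase v := fun x hx =>
          Finset.mem_erase.mpr ⟨fun h => hvS (h ▸ hx), hSW hx⟩
        calc S.card ≤ (W₂.erase v).card := Finset.card_le_card this
        _ < W₂.card := Finset.card_erase_lt_of_mem hvW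
      have h3 : W₂.card ≤ Fintype.card α := by
        simpa using Finset.card_le_univ W₂
      omega
    have hne : (CNT \ used).Nonempty := by
      rw [← Finset.card_pos]
      have := Finset.le_card_sdiff used CNT
      omega
    obtain ⟨y, hy⟩ := hne
    have hyCN : y ∈ CNT := (Finset.mem_sdiff.mp hy).1
    have hyused : y ∉ used := (Finset.mem_sdiff.mp hy).2
    refine ⟨Function.update h' v y, ?_, ?_⟩
    · intro x₁ hx₁ x₂ hx₂ heq
      simp only [Finset.coe_insert, Set.mem_insert_iff, Finset.mem_coe] at hx₁ hx₂
      have upd : ∀ z, z ∈ S → Function.update h' v y z = h' z := by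
        intro z hz
        refine Function.update_of_ne ?_ _ _
        rintro rfl
        exact hvS hz
      rcases hx₁ with h1 | h1 <;> rcases hx₂ with h2 | h2
      · rw [h1, h2]
      · exfalso
        rw [h1, Function.update_self, upd x₂ h2] at heq
        exact hyused (Finset.mem_image.mpr ⟨x₂, h2, heq.symm⟩)
      · exfalso
        rw [h2, Function.update_self, upd x₁ h1] at heq
        exact hyused (Finset.mem_image.mpr ⟨x₁, h1, heq⟩)
      · rw [upd x₁ h1, upd x₂ h2] at heq
        exact hinj' h1 h2 heq
    · intro v' hv' w hadj
      rcases Finset.mem_insert.mp hv' with rfl | hv'S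
      · rw [Function.update_self]
        have hwnb : w ∈ F.neighborFinset v' := by simpa using hadj
        have hgw : g w ∈ T := hT₀T (Finset.mem_image.mpr ⟨w, hwnb, rfl⟩)
        have := (Finset.mem_filter.mp hyCN).2
        exact this (g w) hgw
      · have hne' : v' ≠ v := by rintro rfl; exact hvS hv'S
        rw [Function.update_of_ne hne']
        exact hadj' v' hv'S w hadj

/-- Dependent random choice: let `s ≥ 1` and let `F` be a bipartite graph with parts
`W₁, W₂` in which every vertex of `W₂` has degree at most `s`; set `t = |W₂|` and
`C = 2(|V(F)|^s/s! + |V(F)|)`.  For `n` sufficiently large, every bipartite graph `G`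
with parts `V₁, V₂` of size `n` satisfying `∑_{v∈V₁} d(v)^s ≥ (C/2)·n^s` contains a set
`X' ⊆ V₁` with `|X'| ≥ t` in which every `s`-subset has at least `t` common neighbors in
`V₂`; consequently `G` contains a copy of `F`. -/
theorem stmt_15 {α : Type*} [Fintype α] [DecidableEq α]
    (s : ℕ) (hs : 1 ≤ s) (F : SimpleGraph α) [DecidableRel F.Adj]
    (W₂ : Finset α)
    (hbip : ∀ u v, F.Adj u v → (u ∈ W₂ ↔ v ∉ W₂))
    (hdeg : ∀ v ∈ W₂, F.degree v ≤ s) :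
    ∃ n₀ : ℕ, ∀ n : ℕ, n₀ ≤ n →
      ∀ (G : SimpleGraph (Fin n ⊕ Fin n)) (_ : DecidableRel G.Adj),
        (∀ a a', ¬ G.Adj (Sum.inl a) (Sum.inl a')) →
        (∀ b b', ¬ G.Adj (Sum.inr b) (Sum.inr b')) →
        (2 * ((Fintype.card α : ℝ) ^ s / (Nat.factorial s : ℝ) + (Fintype.card α : ℝ)) / 2)
            * (n : ℝ) ^ s ≤
          ∑ a : Fin n, ((G.neighborFinset (Sum.inl a)).card : ℝ) ^ s →
        (∃ X' : Finset (Fin n), W₂.card ≤ X'.card ∧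
          ∀ T ⊆ X', T.card = s →
            W₂.card ≤ (Finset.univ.filter
              (fun b : Fin n => ∀ a ∈ T, G.Adj (Sum.inl a) (Sum.inr b))).card) ∧
        ContainsCopy F G := by
  classical
  set A := Fintype.card α with hA
  set a := min s A with ha
  refine ⟨A ^ s + A + s + 1, ?_⟩
  intro n hn G _instG h11 h22 hsum
  have hn1 : 0 < n := by omega
  have hAn : A ^ s + 1 ≤ n := by omega
  have htA : W₂.card ≤ A := by simpa using Finset.card_le_univ W₂
  -- the degree sets on the `V₂` side
  set N : Fin n → Finset (Fin n) :=
    fun x => Finset.univ.filter fun b => G.Adj (.inl x) (.inr b) with hN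
  have hNcard : ∀ x, (G.neighborFinset (Sum.inl x)).card = (N x).card := by
    intro x
    have himg : G.neighborFinset (Sum.inl x) = (N x).image Sum.inr := by
      ext y
      cases y with
      | inl c => simp [SimpleGraph.mem_neighborFinset, h11 x c, hN]
      | inr b => simp [SimpleGraph.mem_neighborFinset, hN]
    rw [himg, Finset.card_image_of_injective _ Sum.inr_injective]
  have hsum' : ((A : ℝ) ^ s / (Nat.factorial s : ℝ) + A) * n ^ s
      ≤ ∑ x : Fin n, ((N x).card : ℝ) ^ s := by
    have := hsum
    simp_rw [hNcard] at this
    calc ((A : ℝ) ^ s / (Nat.factorial s : ℝ) + A) * n ^ s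
        = (2 * ((A : ℝ) ^ s / (Nat.factorial s : ℝ) + (A : ℝ)) / 2) * (n : ℝ) ^ s := by ring
      _ ≤ _ := this
  -- common neighborhoods
  set CN : Finset (Fin n) → Finset (Fin n) := fun T => Finset.univ.filter
    (fun b : Fin n => ∀ x ∈ T, G.Adj (.inl x) (.inr b)) with hCN
  set X : (Fin s → Fin n) → Finset (Fin n) := fun u =>
    Finset.univ.filter fun x => ∀ i, u i ∈ N x with hX
  -- ∑_u |X u| = ∑_x d(x)^s
  have hXsum : ∑ u : Fin s → Fin n, ((X u).card : ℕ) = ∑ x : Fin n, (N x).card ^ s := by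
    have := drc_sum_comm (Finset.univ : Finset (Fin n))
      (Finset.univ : Finset (Fin s → Fin n)) (fun x u => ∀ i, u i ∈ N x)
    simp only [hX]
    rw [this]
    congr 1
    ext x
    exact drc_pi_card (N x)
  -- bad sets
  set Bad : Finset (Finset (Fin n)) :=
    ((Finset.univ.powersetCard s) ∪ (Finset.univ.powersetCard a)).filter
      (fun T => (CN T).card < A) with hBad
  have hsubX : ∀ (T : Finset (Fin n)) (u : Fin s → Fin n),
      T ⊆ X u ↔ ∀ i, u i ∈ CN T := by
    intro T u
    constructor
    · intro h i
      simp only [hCN, Finset.mem_filter, Finset.mem_univ, true_and]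
      intro x hx
      have := h hx
      simp only [hX, Finset.mem_filter, Finset.mem_univ, true_and] at this
      have := this i
      simpa [hN] using this
    · intro h x hx
      simp only [hX, Finset.mem_filter, Finset.mem_univ, true_and]
      intro i
      have := h i
      simp only [hCN, Finset.mem_filter, Finset.mem_univ, true_and] at this
      simpa [hN] using this x hx
  -- the number of bad pairs
  have hBadcard : Bad.card ≤ n.choose s + n ^ (s - 1) := by
    by_cases hsa : a = s
    · have : ((Finset.univ.powersetCard s) ∪ (Finset.univ.powersetCard a))
          = (Finset.univ.powersetCard s (α := Fin n)) := by rw [hsa, Finset.union_self]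
      calc Bad.card ≤ ((Finset.univ.powersetCard s) ∪ (Finset.univ.powersetCard a)).card :=
            Finset.card_filter_le _ _
        _ = (Finset.univ.powersetCard s (α := Fin n)).card := by rw [this]
        _ = n.choose s := by rw [Finset.card_powersetCard]; simp
        _ ≤ n.choose s + n ^ (s - 1) := Nat.le_add_right _ _
    · have has : a ≤ s - 1 := by
        have := min_le_left s A
        omega
      calc Bad.card ≤ ((Finset.univ.powersetCard s) ∪ (Finset.univ.powersetCard a)).card :=
            Finset.card_filter_le _ _
        _ ≤ (Finset.univ.powersetCard s (α := Fin n)).card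
            + (Finset.univ.powersetCard a (α := Fin n)).card := Finset.card_union_le _ _
        _ = n.choose s + n.choose a := by rw [Finset.card_powersetCard, Finset.card_powersetCard]; simp
        _ ≤ n.choose s + n ^ (s - 1) := by
            have h1 : n.choose a ≤ n ^ a := Nat.choose_le_pow _ _
            have h2 : n ^ a ≤ n ^ (s - 1) := Nat.pow_le_pow_right hn1 has
            omega
  have hBadsum : ∑ u : Fin s → Fin n, (Bad.filter (fun T => T ⊆ X u)).card
      ≤ (n.choose s + n ^ (s - 1)) * A ^ s := by
    have hcomm := drc_sum_comm Bad (Finset.univ : Finset (Fin s → Fin n))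
      (fun T u => T ⊆ X u)
    rw [hcomm]
    have hterm : ∀ T ∈ Bad, (Finset.univ.filter (fun u : Fin s → Fin n => T ⊆ X u)).card
        ≤ A ^ s := by
      intro T hT
      have hTbad : (CN T).card < A := (Finset.mem_filter.mp hT).2
      have : (Finset.univ.filter (fun u : Fin s → Fin n => T ⊆ X u))
          = (Finset.univ.filter (fun u : Fin s → Fin n => ∀ i, u i ∈ CN T)) := by
        ext u; simp only [Finset.mem_filter, Finset.mem_univ, true_and, hsubX]
      rw [this, drc_pi_card]
      exact Nat.pow_le_pow_left (le_of_lt hTbad) s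
    calc ∑ T ∈ Bad, (Finset.univ.filter (fun u : Fin s → Fin n => T ⊆ X u)).card
        ≤ ∑ _T ∈ Bad, A ^ s := Finset.sum_le_sum hterm
      _ = Bad.card * A ^ s := by rw [Finset.sum_const, smul_eq_mul]
      _ ≤ (n.choose s + n ^ (s - 1)) * A ^ s := Nat.mul_le_mul_right _ hBadcard
  -- find a good tuple u
  have hexu : ∃ u : Fin s → Fin n,
      A + (Bad.filter (fun T => T ⊆ X u)).card ≤ (X u).card := by
    by_contra hcon
    push_neg at hcon
    -- then every value is ≤ A - 1 + bad, contradiction with sums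
    have hub : ∀ u : Fin s → Fin n,
        ((X u).card : ℝ) - ((Bad.filter (fun T => T ⊆ X u)).card : ℝ) ≤ (A : ℝ) - 1 := by
      intro u
      have := hcon u
      have h1 : (X u).card + 1 ≤ A + (Bad.filter (fun T => T ⊆ X u)).card := this
      have h2 : ((X u).card : ℝ) + 1 ≤ (A : ℝ) + ((Bad.filter (fun T => T ⊆ X u)).card : ℝ) := by
        exact_mod_cast h1
      linarith
    have hsumub : ∑ u : Fin s → Fin n,
        (((X u).card : ℝ) - ((Bad.filter (fun T => T ⊆ X u)).card : ℝ))
        ≤ ((A : ℝ) - 1) * n ^ s := by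
      calc ∑ u : Fin s → Fin n, (((X u).card : ℝ) - ((Bad.filter (fun T => T ⊆ X u)).card : ℝ))
          ≤ ∑ _u : Fin s → Fin n, ((A : ℝ) - 1) := Finset.sum_le_sum (fun u _ => hub u)
        _ = ((A : ℝ) - 1) * n ^ s := by
            rw [Finset.sum_const, nsmul_eq_mul]
            have hcard : ((Finset.univ : Finset (Fin s → Fin n)).card : ℝ) = (n : ℝ) ^ s := by
              rw [Finset.card_univ]
              rw [Fintype.card_fun]
              push_cast
              simp
            rw [hcard]
            ring
    have hlb : ((A : ℝ) - 1) * n ^ s < ∑ u : Fin s → Fin n,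
        (((X u).card : ℝ) - ((Bad.filter (fun T => T ⊆ X u)).card : ℝ)) := by
      rw [Finset.sum_sub_distrib]
      have e1 : ∑ u : Fin s → Fin n, ((X u).card : ℝ)
          = ((∑ u : Fin s → Fin n, (X u).card : ℕ) : ℝ) := by push_cast; rfl
      have e2 : ∑ u : Fin s → Fin n, ((Bad.filter (fun T => T ⊆ X u)).card : ℝ)
          = ((∑ u : Fin s → Fin n, (Bad.filter (fun T => T ⊆ X u)).card : ℕ) : ℝ) := by
        push_cast; rfl
      rw [e1, e2, hXsum]
      have hb1 : ((∑ u : Fin s → Fin n, (Bad.filter (fun T => T ⊆ X u)).card : ℕ) : ℝ)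
          ≤ ((n.choose s : ℝ) + (n : ℝ) ^ (s - 1)) * (A : ℝ) ^ s := by
        have := hBadsum
        calc ((∑ u : Fin s → Fin n, (Bad.filter (fun T => T ⊆ X u)).card : ℕ) : ℝ)
            ≤ (((n.choose s + n ^ (s - 1)) * A ^ s : ℕ) : ℝ) := by exact_mod_cast this
          _ = ((n.choose s : ℝ) + (n : ℝ) ^ (s - 1)) * (A : ℝ) ^ s := by push_cast; ring
      have hchoose : (n.choose s : ℝ) ≤ (n : ℝ) ^ s / (Nat.factorial s : ℝ) :=
        Nat.choose_le_pow_div s n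
      have hd : ((∑ x : Fin n, (N x).card ^ s : ℕ) : ℝ)
          = ∑ x : Fin n, ((N x).card : ℝ) ^ s := by push_cast; rfl
      rw [hd]
      have hfacpos : (0 : ℝ) < (Nat.factorial s : ℝ) := by
        exact_mod_cast Nat.factorial_pos s
      have hApow : (0 : ℝ) ≤ (A : ℝ) ^ s := by positivity
      have hb2 : ((n.choose s : ℝ) + (n : ℝ) ^ (s - 1)) * (A : ℝ) ^ s
          ≤ ((n : ℝ) ^ s / (Nat.factorial s : ℝ) + (n : ℝ) ^ (s - 1)) * (A : ℝ) ^ s := by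
        apply mul_le_mul_of_nonneg_right _ hApow
        linarith
      -- key numeric estimate
      have hAsn : (A : ℝ) ^ s ≤ (n : ℝ) - 1 := by
        have : (A ^ s : ℕ) ≤ n - 1 := by omega
        have h' : ((A ^ s : ℕ) : ℝ) ≤ ((n - 1 : ℕ) : ℝ) := by exact_mod_cast this
        push_cast at h'
        rw [Nat.cast_sub (by omega)] at h'
        push_cast at h'
        linarith [h']
      have hp1 : (0 : ℝ) < (n : ℝ) ^ (s - 1) := by positivity
      have hmul : (n : ℝ) ^ (s - 1) * (A : ℝ) ^ s ≤ (n : ℝ) ^ (s - 1) * ((n : ℝ) - 1) :=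
        mul_le_mul_of_nonneg_left hAsn (le_of_lt hp1)
      have hpow : (n : ℝ) ^ (s - 1) * (n : ℝ) = (n : ℝ) ^ s := by
        rw [← pow_succ]
        congr 1
        omega
      have hb3 : ((∑ u : Fin s → Fin n, (Bad.filter (fun T => T ⊆ X u)).card : ℕ) : ℝ)
          ≤ ((n : ℝ) ^ s / (Nat.factorial s : ℝ) + (n : ℝ) ^ (s - 1)) * (A : ℝ) ^ s :=
        le_trans hb1 hb2
      have hkey0 : ((A : ℝ) ^ s / (Nat.factorial s : ℝ) + A) * (n : ℝ) ^ s
          - ((n : ℝ) ^ s / (Nat.factorial s : ℝ) + (n : ℝ) ^ (s - 1)) * (A : ℝ) ^ s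
          = (A : ℝ) * (n : ℝ) ^ s - (n : ℝ) ^ (s - 1) * (A : ℝ) ^ s := by ring
      nlinarith [hsum', hb3]
    linarith
  obtain ⟨u, hu⟩ := hexu
  -- build X'
  set B := Bad.filter (fun T => T ⊆ X u) with hB
  set del : Finset (Fin n) := B.image
    (fun T => if hT : T.Nonempty then T.min' hT else ⟨0, hn1⟩) with hdel
  set X' : Finset (Fin n) := X u \ del with hX'
  have hX'card : A ≤ X'.card := by
    have h1 : del.card ≤ B.card := Finset.card_image_le
    have h2 := Finset.le_card_sdiff del (X u)
    have h3 : A + B.card ≤ (X u).card := hu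
    simp only [hX'] at *
    omega
  have hkey : ∀ T ⊆ X', (T.card = s ∨ T.card = a) → A ≤ (CN T).card := by
    intro T hTX' hTc
    by_contra hcl
    push_neg at hcl
    have hApos : 0 < A := lt_of_le_of_lt (Nat.zero_le _) hcl
    have hTne : T.Nonempty := by
      rw [← Finset.card_pos]
      rcases hTc with h | h
      · omega
      · have : 0 < a := lt_min (by omega) hApos
        omega
    have hTBad : T ∈ Bad := by
      rw [hBad, Finset.mem_filter]
      refine ⟨?_, hcl⟩
      rw [Finset.mem_union, Finset.mem_powersetCard, Finset.mem_powersetCard]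
      rcases hTc with h | h
      · exact Or.inl ⟨Finset.subset_univ _, h⟩
      · exact Or.inr ⟨Finset.subset_univ _, h⟩
    have hTB : T ∈ B := by
      rw [hB, Finset.mem_filter]
      exact ⟨hTBad, fun x hx => (Finset.mem_sdiff.mp (hTX' hx)).1⟩
    have hmin : T.min' hTne ∈ del := by
      rw [hdel, Finset.mem_image]
      exact ⟨T, hTB, by rw [dif_pos hTne]⟩
    have : T.min' hTne ∈ X' := hTX' (Finset.min'_mem T hTne)
    exact (Finset.mem_sdiff.mp this).2 hmin
  constructor
  · -- first conjunct: X' works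
    refine ⟨X', le_trans htA hX'card, ?_⟩
    intro T hT hTcard
    exact le_trans htA (hkey T hT (Or.inl hTcard))
  · -- the copy of F
    -- injection of W₂ᶜ into X'
    have hcompl : (W₂ᶜ : Finset α).card ≤ X'.card := by
      have : (W₂ᶜ : Finset α).card ≤ A := by simpa using Finset.card_le_univ W₂ᶜ
      omega
    have hcard2 : Fintype.card (↥(W₂ᶜ : Finset α)) ≤ Fintype.card (↥X') := by
      rw [Fintype.card_coe, Fintype.card_coe]; exact hcompl
    obtain ⟨e⟩ := Function.Embedding.nonempty_of_card_le hcard2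
    set g : α → Fin n := fun x => if hx : x ∈ W₂ then ⟨0, hn1⟩
      else (e ⟨x, by simp [hx]⟩ : ↥X') with hg
    have hg2 : ∀ w ∉ W₂, g w ∈ X' := by
      intro w hw
      simp only [hg, dif_neg hw]
      exact (e ⟨w, by simp [hw]⟩).2
    have hginj : ∀ x ∉ W₂, ∀ y ∉ W₂, g x = g y → x = y := by
      intro x hx y hy hxy
      simp only [hg, dif_neg hx, dif_neg hy] at hxy
      have := e.injective (Subtype.ext hxy)
      exact congrArg Subtype.val this
    obtain ⟨h, hinj, hadj⟩ := drc_greedy hn1 F W₂ hbip hdeg G X' hX'card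
      (fun T hT hTc => hkey T hT (Or.inr hTc)) g hg2 W₂ (Finset.Subset.refl W₂)
    set f : α → Fin n ⊕ Fin n :=
      fun x => if x ∈ W₂ then Sum.inr (h x) else Sum.inl (g x) with hf
    have hfinj : Function.Injective f := by
      intro x y hxy
      by_cases hx : x ∈ W₂ <;> by_cases hy : y ∈ W₂
      · simp only [hf, if_pos hx, if_pos hy, Sum.inr.injEq] at hxy
        exact hinj (Finset.mem_coe.mpr hx) (Finset.mem_coe.mpr hy) hxy
      · simp only [hf, if_pos hx, if_neg hy] at hxy
        exact absurd hxy (by simp)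
      · simp only [hf, if_neg hx, if_pos hy] at hxy
        exact absurd hxy (by simp)
      · simp only [hf, if_neg hx, if_neg hy, Sum.inl.injEq] at hxy
        exact hginj x hx y hy hxy
    refine ⟨⟨f, hfinj⟩, ?_⟩
    intro x y hxy
    by_cases hx : x ∈ W₂
    · have hy : y ∉ W₂ := (hbip x y hxy).mp hx
      simp only [hf, Function.Embedding.coeFn_mk, if_pos hx, if_neg hy]
      exact (hadj x hx y hxy).symm
    · have hy : y ∈ W₂ := by
        have := hbip x y hxy
        tauto
      simp only [hf, Function.Embedding.coeFn_mk, if_neg hx, if_pos hy]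
      exact hadj y hy x hxy.symm
end

section
/- Let s ≥ 1 be an integer and let F be a bipartite graph with parts W₁, W₂ where every vertex of W₂ has degree at most s. Then for sufficiently large n, every n-vertex F-free graph G satisfies Σ_{v∈V(G)} d(v)^s ≤ 2(|V(F)|^s/s! + |V(F)|)·n^s. -/
open Finset

/-- Greedy embedding lemma. -/
lemma embed_aux {α : Type*} [Fintype α] [DecidableEq α] {n s : ℕ}
    (F : SimpleGraph α) [DecidableRel F.Adj] (W₂ : Finset α)
    (hbip : ∀ u v, F.Adj u v → (u ∈ W₂ ↔ v ∉ W₂))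
    (hdeg : ∀ v ∈ W₂, F.degree v ≤ s)
    (G : SimpleGraph (Fin n)) [DecidableRel G.Adj]
    (hm : 0 < Fintype.card α)
    (A' : Finset (Fin n))
    (hA' : Fintype.card α ≤ A'.card)
    (hgood : ∀ S ⊆ A', S.card ≤ s →
      Fintype.card α ≤ (univ.filter fun v => ∀ u ∈ S, G.Adj u v).card) :
    ∃ f : α ↪ Fin n, ∀ a b, F.Adj a b → G.Adj (f a) (f b) := by
  classical
  obtain ⟨v₀, hv₀⟩ : A'.Nonempty := card_pos.mp (lt_of_lt_of_le hm hA')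
  -- base injection of W₂ᶜ into A'
  obtain ⟨g₀⟩ : Nonempty ((W₂ᶜ : Finset α) ↪ (A' : Finset (Fin n))) := by
    apply Function.Embedding.nonempty_of_card_le
    simp only [Fintype.card_coe]
    exact le_trans (card_le_univ _) hA'
  set g₁ : α → Fin n := fun a => if h : a ∈ W₂ᶜ then (g₀ ⟨a, h⟩ : Fin n) else v₀ with hg₁
  have hg₁A : ∀ a ∈ W₂ᶜ, g₁ a ∈ A' := by
    intro a ha
    simp only [hg₁, dif_pos ha]
    exact (g₀ ⟨a, ha⟩).2
  have hg₁inj : Set.InjOn g₁ (W₂ᶜ : Finset α) := by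
    intro a ha b hb hab
    simp only [Finset.mem_coe] at ha hb
    simp only [hg₁, dif_pos ha, dif_pos hb] at hab
    have := g₀.injective (Subtype.ext hab)
    exact congrArg Subtype.val this
  -- greedy extension over subsets of W₂
  have key : ∀ W : Finset α, W ⊆ W₂ → ∃ f : α → Fin n,
      (∀ a ∈ W₂ᶜ, f a = g₁ a) ∧
      Set.InjOn f ((W₂ᶜ ∪ W : Finset α) : Set α) ∧
      (∀ w ∈ W, ∀ u, F.Adj u w → G.Adj (f u) (f w)) := by
    intro W
    induction W using Finset.induction_on with
    | empty =>
      intro _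
      refine ⟨g₁, fun a _ => rfl, ?_, by simp⟩
      simpa using hg₁inj
    | @insert w W' hw ih =>
      intro hWsub
      have hwW₂ : w ∈ W₂ := hWsub (mem_insert_self _ _)
      have hW'sub : W' ⊆ W₂ := fun x hx => hWsub (mem_insert_of_mem hx)
      obtain ⟨f, hf₁, hf₂, hf₃⟩ := ih hW'sub
      -- the set of images of F-neighbors of w
      set S : Finset (Fin n) := (F.neighborFinset w).image f with hS
      have hnbhd' : ∀ w'' ∈ W₂, ∀ u, F.Adj u w'' → u ∈ W₂ᶜ := by
        intro w'' hw'' u hu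
        simp only [Finset.mem_compl]
        intro huW₂
        exact ((hbip u w'' hu).mp huW₂) hw''
      have hnbhd : ∀ u, F.Adj u w → u ∈ W₂ᶜ := hnbhd' w hwW₂
      have hSsub : S ⊆ A' := by
        intro x hx
        simp only [hS, mem_image, SimpleGraph.mem_neighborFinset] at hx
        obtain ⟨u, hu, rfl⟩ := hx
        have hu' := hnbhd u hu.symm
        rw [hf₁ u hu']
        exact hg₁A u hu'
      have hScard : S.card ≤ s := by
        calc S.card ≤ (F.neighborFinset w).card := card_image_le
        _ ≤ s := hdeg w hwW₂
      have hN := hgood S hSsub hScard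
      -- used vertices
      set Used : Finset (Fin n) := (W₂ᶜ ∪ W').image f with hUsed
      have hUsedcard : Used.card < Fintype.card α := by
        have h1 : Used.card ≤ (W₂ᶜ ∪ W').card := card_image_le
        have h2 : (W₂ᶜ ∪ W') ⊂ univ := by
          rw [ssubset_univ_iff]
          intro h
          have : w ∈ W₂ᶜ ∪ W' := h ▸ mem_univ w
          simp only [mem_union, Finset.mem_compl] at this
          rcases this with h' | h'
          · exact h' hwW₂
          · exact hw h'
        exact lt_of_le_of_lt h1 (by simpa using card_lt_card h2)
      -- pick a fresh common neighbor
      have hexy : ∃ y ∈ (univ.filter fun v => ∀ u ∈ S, G.Adj u v), y ∉ Used := by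
        by_contra hcon
        push_neg at hcon
        have hsub : (univ.filter fun v => ∀ u ∈ S, G.Adj u v) ⊆ Used := hcon
        have := card_le_card hsub
        omega
      obtain ⟨y, hy, hyUsed⟩ := hexy
      have hyadj : ∀ x ∈ S, G.Adj x y := by
        simp only [mem_filter] at hy
        exact hy.2
      refine ⟨Function.update f w y, ?_, ?_, ?_⟩
      · intro a ha
        have haw : a ≠ w := by
          intro h; subst h
          exact (Finset.mem_compl.mp ha) hwW₂
        rw [Function.update_of_ne haw]
        exact hf₁ a ha
      · intro a ha b hb hab
        simp only [Finset.coe_union, Set.mem_union, Finset.mem_coe, mem_insert,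
          Finset.coe_insert, Set.mem_insert_iff] at ha hb
        have hmem : ∀ c, (c ∈ W₂ᶜ ∨ c = w ∨ c ∈ W') → c ≠ w → c ∈ ((W₂ᶜ ∪ W' : Finset α) : Set α) := by
          intro c hc hcw
          simp only [Finset.coe_union, Set.mem_union, Finset.mem_coe]
          rcases hc with h | h | h
          · exact Or.inl h
          · exact absurd h hcw
          · exact Or.inr h
        by_cases haw : a = w
        · by_cases hbw : b = w
          · rw [haw, hbw]
          · exfalso
            rw [haw, Function.update_self, Function.update_of_ne hbw] at hab
            apply hyUsed
            rw [hab]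
            exact mem_image_of_mem f (by simpa using hmem b hb hbw)
        · by_cases hbw : b = w
          · exfalso
            rw [hbw, Function.update_self, Function.update_of_ne haw] at hab
            apply hyUsed
            rw [← hab]
            exact mem_image_of_mem f (by simpa using hmem a ha haw)
          · rw [Function.update_of_ne haw, Function.update_of_ne hbw] at hab
            exact hf₂ (hmem a ha haw) (hmem b hb hbw) hab
      · intro w' hw' u hu
        have hw'W₂ : w' ∈ W₂ := hWsub hw'
        have huW₂c : u ∈ W₂ᶜ := hnbhd' w' hw'W₂ u hu
        have huw : u ≠ w := by
          intro h; subst h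
          exact (Finset.mem_compl.mp huW₂c) hwW₂
        rw [Function.update_of_ne huw]
        rcases mem_insert.mp hw' with rfl | hw''
        · rw [Function.update_self]
          apply hyadj
          simp only [hS, mem_image, SimpleGraph.mem_neighborFinset]
          exact ⟨u, hu.symm, rfl⟩
        · have hw'w : w' ≠ w := by rintro rfl; exact hw hw''
          rw [Function.update_of_ne hw'w]
          exact hf₃ w' hw'' u hu
  -- conclude
  obtain ⟨f, hf₁, hf₂, hf₃⟩ := key W₂ Finset.Subset.rfl
  have hinj : Function.Injective f := by
    rw [← Set.injOn_univ]
    have : ((W₂ᶜ ∪ W₂ : Finset α) : Set α) = Set.univ := by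
      ext a; simp [em]
    rw [← this]
    exact hf₂
  refine ⟨⟨f, hinj⟩, ?_⟩
  intro a b hab
  simp only [Function.Embedding.coeFn_mk]
  by_cases hb : b ∈ W₂
  · exact hf₃ b hb a hab
  · have ha : a ∈ W₂ := by
      have := hbip a b hab
      tauto
    exact (hf₃ a ha b hab.symm).symm

lemma tuple_count {n s : ℕ} (B : Finset (Fin n)) :
    (univ.filter fun T : Fin s → Fin n => ∀ i, T i ∈ B).card = B.card ^ s := by
  classical
  have h : (univ.filter fun T : Fin s → Fin n => ∀ i, T i ∈ B)
      = Fintype.piFinset (fun _ : Fin s => B) := by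
    ext T; simp [Fintype.mem_piFinset]
  rw [h, Fintype.card_piFinset]
  simp

/-- Let `s ≥ 1` and let `F` be a bipartite graph with parts `W₁, W₂` in which every vertex
of `W₂` has degree at most `s`.  For `n` sufficiently large, every `n`-vertex `F`-free
graph `G` satisfies `∑_v d(v)^s ≤ 2(|V(F)|^s/s! + |V(F)|)·n^s`. -/
theorem stmt_16 {α : Type*} [Fintype α] [DecidableEq α]
    (s : ℕ) (hs : 1 ≤ s) (F : SimpleGraph α) [DecidableRel F.Adj]
    (W₂ : Finset α)
    (hbip : ∀ u v, F.Adj u v → (u ∈ W₂ ↔ v ∉ W₂))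
    (hdeg : ∀ v ∈ W₂, F.degree v ≤ s) :
    ∃ n₀ : ℕ, ∀ n : ℕ, n₀ ≤ n →
      ∀ G : SimpleGraph (Fin n), ¬ ContainsCopy F G →
        ∑ v, ((G.neighborSet v).ncard : ℝ) ^ s ≤
          2 * ((Fintype.card α : ℝ) ^ s / (Nat.factorial s : ℝ) + (Fintype.card α : ℝ))
            * (n : ℝ) ^ s := by
  classical
  set m := Fintype.card α with hmdef
  refine ⟨s * m ^ s + m + 2, ?_⟩
  intro n hn G hF
  haveI : DecidableRel G.Adj := Classical.decRel _
  -- the case of empty α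
  rcases Nat.eq_zero_or_pos m with hm0 | hm0
  · exfalso
    apply hF
    haveI : IsEmpty α := Fintype.card_eq_zero_iff.mp hm0
    exact ⟨Function.Embedding.ofIsEmpty, fun a => isEmptyElim a⟩
  have hn0 : 0 < n := by
    have : 0 < s * m ^ s + m + 2 := by positivity
    omega
  have hmn : m + 1 ≤ n := by nlinarith [Nat.one_le_pow s m hm0, hs]
  -- notations
  set N : Finset (Fin n) → Finset (Fin n) :=
    fun S => univ.filter fun v => ∀ u ∈ S, G.Adj u v with hN
  set A : (Fin s → Fin n) → Finset (Fin n) :=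
    fun T => univ.filter fun v => ∀ i, G.Adj (T i) v with hA
  set Bad : Finset (Finset (Fin n)) :=
    univ.filter fun S => S.Nonempty ∧ S.card ≤ s ∧ (N S).card < m with hBad
  -- Step A: per-tuple bound, using freeness
  have stepA : ∀ T : Fin s → Fin n, (A T).card ≤ (m - 1) + (Bad.filter fun S => S ⊆ A T).card := by
    intro T
    by_contra hcon
    push_neg at hcon
    have hbig : m + (Bad.filter fun S => S ⊆ A T).card ≤ (A T).card := by omega
    set pick : Finset (Fin n) → Fin n :=
      fun S => if h : S.Nonempty then S.min' h else ⟨0, hn0⟩ with hpick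
    set A' : Finset (Fin n) := A T \ (Bad.filter fun S => S ⊆ A T).image pick with hA'
    have hA'card : m ≤ A'.card := by
      have h1 : ((Bad.filter fun S => S ⊆ A T).image pick).card
          ≤ (Bad.filter fun S => S ⊆ A T).card := card_image_le
      have h2 : (A T).card - ((Bad.filter fun S => S ⊆ A T).image pick).card ≤ A'.card := by
        rw [hA']
        exact Finset.le_card_sdiff _ _
      omega
    have hgood : ∀ S ⊆ A', S.card ≤ s →
        m ≤ (univ.filter fun v => ∀ u ∈ S, G.Adj u v).card := by
      intro S hS hcard
      show m ≤ (N S).card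
      by_contra hc
      push_neg at hc
      rcases S.eq_empty_or_nonempty with rfl | hne
      · have hNe : N ∅ = univ := by
          rw [hN]; ext v; simp
        rw [hNe] at hc
        simp only [card_univ, Fintype.card_fin] at hc
        omega
      · have hSBad : S ∈ Bad := by
          rw [hBad]; simp only [mem_filter, mem_univ, true_and]
          exact ⟨hne, hcard, hc⟩
        have hSA : S ⊆ A T := hS.trans (by rw [hA']; exact sdiff_subset)
        have hmemim : pick S ∈ (Bad.filter fun S => S ⊆ A T).image pick :=
          mem_image_of_mem pick (mem_filter.mpr ⟨hSBad, hSA⟩)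
        have hpS : pick S ∈ S := by
          simp only [hpick, dif_pos hne]
          exact S.min'_mem hne
        have hmem' : pick S ∈ A' := hS hpS
        rw [hA', mem_sdiff] at hmem'
        exact hmem'.2 hmemim
    exact hF (embed_aux F W₂ hbip hdeg G hm0 A' hA'card hgood)
  -- Step B: double counting the tuples
  have stepB : ∑ T : Fin s → Fin n, (A T).card = ∑ v : Fin n, (G.degree v) ^ s := by
    calc ∑ T : Fin s → Fin n, (A T).card
        = ∑ T : Fin s → Fin n, ∑ v : Fin n, (if ∀ i, G.Adj (T i) v then 1 else 0) := by
          refine Finset.sum_congr rfl fun T _ => ?_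
          rw [hA]
          exact card_filter _ _
      _ = ∑ v : Fin n, ∑ T : Fin s → Fin n, (if ∀ i, G.Adj (T i) v then 1 else 0) :=
          Finset.sum_comm
      _ = ∑ v : Fin n, (univ.filter fun T : Fin s → Fin n => ∀ i, T i ∈ G.neighborFinset v).card := by
          refine Finset.sum_congr rfl fun v _ => ?_
          rw [card_filter]
          refine Finset.sum_congr rfl fun T _ => ?_
          congr 1
          simp only [eq_iff_iff]
          constructor
          · intro h i; rw [SimpleGraph.mem_neighborFinset]; exact (h i).symm
          · intro h i; exact ((SimpleGraph.mem_neighborFinset _ _ _).mp (h i)).symm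
      _ = ∑ v : Fin n, (G.degree v) ^ s := by
          refine Finset.sum_congr rfl fun v _ => ?_
          rw [tuple_count]
          rfl
  -- Step C: counting bad incidences
  have stepC : ∑ T : Fin s → Fin n, (Bad.filter fun S => S ⊆ A T).card ≤ Bad.card * m ^ s := by
    have h1 : ∑ T : Fin s → Fin n, (Bad.filter fun S => S ⊆ A T).card
        = ∑ S ∈ Bad, (univ.filter fun T : Fin s → Fin n => ∀ i, T i ∈ N S).card := by
      calc ∑ T : Fin s → Fin n, (Bad.filter fun S => S ⊆ A T).card
          = ∑ T : Fin s → Fin n, ∑ S ∈ Bad, (if S ⊆ A T then 1 else 0) := by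
            refine Finset.sum_congr rfl fun T _ => ?_
            exact card_filter _ _
        _ = ∑ S ∈ Bad, ∑ T : Fin s → Fin n, (if S ⊆ A T then 1 else 0) :=
            Finset.sum_comm
        _ = ∑ S ∈ Bad, (univ.filter fun T : Fin s → Fin n => ∀ i, T i ∈ N S).card := by
            refine Finset.sum_congr rfl fun S _ => ?_
            rw [card_filter]
            refine Finset.sum_congr rfl fun T _ => ?_
            congr 1
            simp only [eq_iff_iff]
            constructor
            · intro h i
              rw [hN]
              simp only [mem_filter, mem_univ, true_and]
              intro u hu
              have := h hu
              rw [hA] at this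
              simp only [mem_filter, mem_univ, true_and] at this
              exact (this i).symm
            · intro h u hu
              rw [hA]
              simp only [mem_filter, mem_univ, true_and]
              intro i
              have := h i
              rw [hN] at this
              simp only [mem_filter, mem_univ, true_and] at this
              exact (this u hu).symm
    rw [h1]
    have h2 : ∀ S ∈ Bad, (univ.filter fun T : Fin s → Fin n => ∀ i, T i ∈ N S).card ≤ m ^ s := by
      intro S hS
      rw [tuple_count]
      apply Nat.pow_le_pow_left
      rw [hBad] at hS
      simp only [mem_filter, mem_univ, true_and] at hS
      exact le_of_lt hS.2.2
    calc ∑ S ∈ Bad, (univ.filter fun T : Fin s → Fin n => ∀ i, T i ∈ N S).card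
        ≤ ∑ _S ∈ Bad, m ^ s := Finset.sum_le_sum h2
      _ = Bad.card * m ^ s := by rw [Finset.sum_const, smul_eq_mul]
  -- Step D: the number of bad sets
  have stepD : Bad.card ≤ (s - 1) * n ^ (s - 1) + n.choose s := by
    have hsub : Bad ⊆ (range s).biUnion fun t => (univ : Finset (Fin n)).powersetCard (t + 1) := by
      intro S hS
      rw [hBad] at hS
      simp only [mem_filter, mem_univ, true_and] at hS
      obtain ⟨hne, hcard, -⟩ := hS
      have h1 : 1 ≤ S.card := card_pos.mpr hne
      rw [mem_biUnion]
      exact ⟨S.card - 1, mem_range.mpr (by omega), mem_powersetCard.mpr ⟨subset_univ S, by omega⟩⟩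
    have h2 : Bad.card ≤ ∑ t ∈ range s, ((univ : Finset (Fin n)).powersetCard (t + 1)).card :=
      le_trans (card_le_card hsub) (card_biUnion_le)
    have h3 : ∀ t, ((univ : Finset (Fin n)).powersetCard (t + 1)).card = n.choose (t + 1) := by
      intro t
      rw [card_powersetCard, card_univ, Fintype.card_fin]
    have h4 : Bad.card ≤ ∑ t ∈ range s, n.choose (t + 1) := by
      simpa only [h3] using h2
    have h5 : ∑ t ∈ range s, n.choose (t + 1)
        = (∑ t ∈ range (s - 1), n.choose (t + 1)) + n.choose s := by
      obtain ⟨k, rfl⟩ : ∃ k, s = k + 1 := ⟨s - 1, by omega⟩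
      simp [Finset.sum_range_succ]
    have h6 : ∑ t ∈ range (s - 1), n.choose (t + 1) ≤ (s - 1) * n ^ (s - 1) := by
      calc ∑ t ∈ range (s - 1), n.choose (t + 1)
          ≤ ∑ t ∈ range (s - 1), n ^ (s - 1) := by
            refine Finset.sum_le_sum fun t ht => ?_
            calc n.choose (t + 1) ≤ n ^ (t + 1) := Nat.choose_le_pow n (t + 1)
              _ ≤ n ^ (s - 1) := Nat.pow_le_pow_right hn0 (by
                  have := mem_range.mp ht; omega)
        _ = (s - 1) * n ^ (s - 1) := by rw [Finset.sum_const, card_range, smul_eq_mul]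
    omega
  -- Step E: assemble in ℕ
  have stepE : ∑ v : Fin n, (G.degree v) ^ s
      ≤ (m - 1) * n ^ s + ((s - 1) * n ^ (s - 1) + n.choose s) * m ^ s := by
    have h1 : ∑ T : Fin s → Fin n, (A T).card
        ≤ ∑ T : Fin s → Fin n, ((m - 1) + (Bad.filter fun S => S ⊆ A T).card) :=
      Finset.sum_le_sum fun T _ => stepA T
    rw [Finset.sum_add_distrib, Finset.sum_const, card_univ] at h1
    have hcardfun : Fintype.card (Fin s → Fin n) = n ^ s := by
      simp [Fintype.card_fun]
    rw [hcardfun, smul_eq_mul] at h1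
    calc ∑ v : Fin n, (G.degree v) ^ s = ∑ T : Fin s → Fin n, (A T).card := stepB.symm
      _ ≤ n ^ s * (m - 1) + ∑ T : Fin s → Fin n, (Bad.filter fun S => S ⊆ A T).card := h1
      _ ≤ n ^ s * (m - 1) + Bad.card * m ^ s := Nat.add_le_add_left stepC _
      _ = (m - 1) * n ^ s + Bad.card * m ^ s := by rw [Nat.mul_comm]
      _ ≤ (m - 1) * n ^ s + ((s - 1) * n ^ (s - 1) + n.choose s) * m ^ s :=
          Nat.add_le_add_left (Nat.mul_le_mul_right _ stepD) _
  -- Step F: real arithmetic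
  have hm1 : 1 ≤ m := hm0
  have hncard : ∀ v : Fin n, (G.neighborSet v).ncard = G.degree v := by
    intro v
    rw [Set.ncard_eq_toFinset_card']
    simp [SimpleGraph.neighborFinset, SimpleGraph.degree]
  have hLHS : ∑ v, ((G.neighborSet v).ncard : ℝ) ^ s
      = ((∑ v : Fin n, (G.degree v) ^ s : ℕ) : ℝ) := by
    push_cast
    exact Finset.sum_congr rfl fun v _ => by rw [hncard v]
  rw [hLHS]
  have hfac : (0:ℝ) < (Nat.factorial s : ℝ) := by
    exact_mod_cast Nat.factorial_pos s
  have hx1 : (0:ℝ) ≤ (n:ℝ) ^ (s - 1) := by positivity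
  have hms : (0:ℝ) ≤ (m:ℝ) ^ s := by positivity
  have hpow : (n:ℝ) ^ s = (n:ℝ) * (n:ℝ) ^ (s - 1) := by
    obtain ⟨k, rfl⟩ : ∃ k, s = k + 1 := ⟨s - 1, by omega⟩
    rw [pow_succ]
    simp [mul_comm]
  have hsn : (s:ℝ) * (m:ℝ) ^ s ≤ (n:ℝ) := by
    have h : s * m ^ s ≤ n := by omega
    exact_mod_cast h
  have hchoose : (n.choose s : ℝ) ≤ (n:ℝ) ^ s / (Nat.factorial s : ℝ) := by
    rw [le_div_iff₀ hfac]
    have h : s.factorial * n.choose s ≤ n ^ s := by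
      rw [← Nat.descFactorial_eq_factorial_mul_choose]
      exact Nat.descFactorial_le_pow n s
    have h' : (s.factorial : ℝ) * (n.choose s : ℝ) ≤ (n:ℝ) ^ s := by exact_mod_cast h
    linarith
  have hR : ((∑ v : Fin n, (G.degree v) ^ s : ℕ) : ℝ)
      ≤ ((m:ℝ) - 1) * (n:ℝ) ^ s + ((s:ℝ) - 1) * (n:ℝ) ^ (s - 1) * (m:ℝ) ^ s
        + (n.choose s : ℝ) * (m:ℝ) ^ s := by
    calc ((∑ v : Fin n, (G.degree v) ^ s : ℕ) : ℝ)
        ≤ (((m - 1) * n ^ s + ((s - 1) * n ^ (s - 1) + n.choose s) * m ^ s : ℕ) : ℝ) :=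
          Nat.cast_le.mpr stepE
      _ = ((m:ℝ) - 1) * (n:ℝ) ^ s + ((s:ℝ) - 1) * (n:ℝ) ^ (s - 1) * (m:ℝ) ^ s
          + (n.choose s : ℝ) * (m:ℝ) ^ s := by
          push_cast [Nat.cast_sub hm1, Nat.cast_sub hs]
          ring
  have key1 : ((s:ℝ) - 1) * (n:ℝ) ^ (s - 1) * (m:ℝ) ^ s ≤ (n:ℝ) ^ s := by
    have hs1 : (1:ℝ) ≤ (s:ℝ) := by exact_mod_cast hs
    calc ((s:ℝ) - 1) * (n:ℝ) ^ (s - 1) * (m:ℝ) ^ s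
        ≤ (s:ℝ) * (m:ℝ) ^ s * (n:ℝ) ^ (s - 1) := by nlinarith
      _ ≤ (n:ℝ) * (n:ℝ) ^ (s - 1) := mul_le_mul_of_nonneg_right hsn hx1
      _ = (n:ℝ) ^ s := hpow.symm
  have key2 : (n.choose s : ℝ) * (m:ℝ) ^ s ≤ (n:ℝ) ^ s / (Nat.factorial s : ℝ) * (m:ℝ) ^ s :=
    mul_le_mul_of_nonneg_right hchoose hms
  have hnonneg : (0:ℝ) ≤ ((m:ℝ) ^ s / (Nat.factorial s : ℝ) + (m:ℝ)) * (n:ℝ) ^ s := by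
    positivity
  have hexp : (n:ℝ) ^ s / (Nat.factorial s : ℝ) * (m:ℝ) ^ s
      = (m:ℝ) ^ s / (Nat.factorial s : ℝ) * (n:ℝ) ^ s := by ring
  nlinarith [hR, key1, key2, hnonneg]
end

section
/- If a bipartite graph H contains two distinct paths of length ℓ with the same pair of endpoints, then H contains a cycle of length 2i for some i with 2 ≤ i ≤ ℓ. -/
open SimpleGraph

private lemma walk_parity {V : Type*} {H : SimpleGraph V} (f : V → ZMod 2)
    (hf : ∀ {a b : V}, H.Adj a b → f a ≠ f b) {x y : V} (w : H.Walk x y) :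
    f y = f x + w.length := by
  induction w with
  | nil => simp
  | @cons a b c h w ih =>
    have hab : f b = f a + 1 := by
      have hne := hf h
      revert hne
      generalize f a = s; generalize f b = t
      revert s t; decide
    rw [ih, hab, Walk.length_cons]
    push_cast
    ring

private lemma cycle_even_length {V : Type*} {H : SimpleGraph V} (hbip : H.Colorable 2)
    {w : V} (c : H.Walk w w) : 2 ∣ c.length := by
  obtain ⟨C⟩ := hbip
  have hf : ∀ {a b : V}, H.Adj a b → (C a : ZMod 2) ≠ C b := fun h => C.valid h
  have := walk_parity (fun v => (C v : ZMod 2)) hf c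
  have h0 : ((c.length : ℕ) : ZMod 2) = 0 := left_eq_add.mp this
  exact (ZMod.natCast_eq_zero_iff _ _).mp h0

/-- If a bipartite graph `H` contains two distinct paths of length `ℓ` with the same pair
of endpoints, then `H` contains a cycle of length `2i` for some `2 ≤ i ≤ ℓ`. -/
theorem stmt_19 {V : Type*} (H : SimpleGraph V) (hbip : H.Colorable 2)
    (l : ℕ) {u v : V} (p q : H.Walk u v) (hp : p.IsPath) (hq : q.IsPath)
    (hpl : p.length = l) (hql : q.length = l) (hne : p ≠ q) :
    ∃ i : ℕ, 2 ≤ i ∧ i ≤ l ∧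
      ∃ (w : V) (c : H.Walk w w), c.IsCycle ∧ c.length = 2 * i := by
  classical
  set S : Set (Sym2 V) := {e | e ∈ p.edges ∨ e ∈ q.edges} with hS
  set G' : SimpleGraph V := SimpleGraph.fromEdgeSet S with hG'
  have hmemS : ∀ e ∈ S, e ∈ G'.edgeSet := by
    intro e he
    rw [hG', edgeSet_fromEdgeSet]
    refine ⟨he, ?_⟩
    have : e ∈ H.edgeSet := by
      rcases he with h1 | h1
      · exact p.edges_subset_edgeSet h1
      · exact q.edges_subset_edgeSet h1
    exact H.not_isDiag_of_mem_edgeSet this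
  have hpS : ∀ e ∈ p.edges, e ∈ G'.edgeSet := fun e he => hmemS e (Or.inl he)
  have hqS : ∀ e ∈ q.edges, e ∈ G'.edgeSet := fun e he => hmemS e (Or.inr he)
  have hle : G' ≤ H := by
    intro a b hab
    have : s(a, b) ∈ G'.edgeSet := hab
    rw [hG', edgeSet_fromEdgeSet] at this
    rcases this.1 with h1 | h1
    · exact p.edges_subset_edgeSet h1
    · exact q.edges_subset_edgeSet h1
  set p' : G'.Walk u v := p.transfer G' hpS with hp'def
  set q' : G'.Walk u v := q.transfer G' hqS with hq'def
  have hp' : p'.IsPath := hp.transfer hpS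
  have hq' : q'.IsPath := hq.transfer hqS
  have hbp : ∀ e ∈ p'.edges, e ∈ H.edgeSet :=
    fun e he => edgeSet_mono hle (p'.edges_subset_edgeSet he)
  have hbq : ∀ e ∈ q'.edges, e ∈ H.edgeSet :=
    fun e he => edgeSet_mono hle (q'.edges_subset_edgeSet he)
  have hpb : p'.transfer H hbp = p :=
    (p.transfer_transfer hpS (p.edges_transfer hpS ▸ hbp)).trans p.transfer_self
  have hqb : q'.transfer H hbq = q :=
    (q.transfer_transfer hqS (q.edges_transfer hqS ▸ hbq)).trans q.transfer_self
  have hne' : p' ≠ q' := by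
    intro h
    apply hne
    rw [← hpb, ← hqb]
    congr 1
  have hnac : ¬ G'.IsAcyclic := by
    intro hac
    exact hne' (Subtype.mk_eq_mk.mp (isAcyclic_iff_path_unique.mp hac ⟨p', hp'⟩ ⟨q', hq'⟩))
  simp only [IsAcyclic, not_forall, not_not] at hnac
  obtain ⟨w, c, hc⟩ := hnac
  -- length bound
  have hsub : c.edges ⊆ p.edges ++ q.edges := by
    intro e he
    have : e ∈ G'.edgeSet := c.edges_subset_edgeSet he
    rw [hG', edgeSet_fromEdgeSet] at this
    rcases this.1 with h1 | h1
    · exact List.mem_append_left _ h1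
    · exact List.mem_append_right _ h1
  have hlen : c.length ≤ 2 * l := by
    have h1 : c.edges.length = c.edges.toFinset.card :=
      (List.toFinset_card_of_nodup hc.edges_nodup).symm
    have h2 : c.edges.toFinset ⊆ (p.edges ++ q.edges).toFinset := by
      intro e he
      rw [List.mem_toFinset] at he ⊢
      exact hsub he
    have h3 : (p.edges ++ q.edges).toFinset.card ≤ (p.edges ++ q.edges).length :=
      List.toFinset_card_le _
    have h4 : (p.edges ++ q.edges).length = 2 * l := by
      rw [List.length_append, Walk.length_edges, Walk.length_edges, hpl, hql]
      ring
    calc c.length = c.edges.length := (Walk.length_edges c).symm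
      _ = c.edges.toFinset.card := h1
      _ ≤ (p.edges ++ q.edges).toFinset.card := Finset.card_le_card h2
      _ ≤ 2 * l := by rw [← h4]; exact h3
  -- map to H
  set cH : H.Walk w w := c.mapLe hle with hcH
  have hcHcyc : cH.IsCycle := hc.mapLe hle
  have hcHlen : cH.length = c.length := Walk.length_map _ _
  have heven : 2 ∣ cH.length := cycle_even_length hbip cH
  obtain ⟨i, hi⟩ := heven
  refine ⟨i, ?_, ?_, w, cH, hcHcyc, by omega⟩
  · have := hcHcyc.three_le_length; omega
  · omega
end
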